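/- (Myhill property for cancellative left-amenable semigroups) Let S be a cancellative left-amenable semigroup and A a finite set. Then every pre-injective cellular automaton τ : A^S → A^S is surjective. In particular, every injective cellular automaton over S with finite alphabet is surjective. -/

import Mathlib

open Finset

private lemma binom_aux (a : ℕ) : ∀ n : ℕ, a ^ (n+1) + (n+1) * a ^ n ≤ (a+1) ^ (n+1) := by
  intro n
  induction n with
  | zero => simp [pow_succ]
  | succ n ih =>
    have h : (a+1) ^ (n+2) = (a+1)^(n+1) * (a+1) := by ring
    calc a ^ (n+2) + (n+2) * a ^ (n+1)
        ≤ (a ^ (n+1) + (n+1) * a ^ n) * (a+1) := by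
          ring_nf
          nlinarith [pow_nonneg (Nat.zero_le a) n, Nat.le_refl 0]
      _ ≤ (a+1)^(n+1) * (a+1) := Nat.mul_le_mul_right _ ih
      _ = (a+1) ^ (n+2) := h.symm

private lemma pow_ratio_aux (a K : ℕ) (_ha : 1 ≤ a) :
    ∃ n : ℕ, 1 ≤ n ∧ K * a ^ n < (a+1) ^ n := by
  set m := (K - 1) * a with hm
  refine ⟨m + 1, Nat.le_add_left 1 m, ?_⟩
  have h1 : K * a ^ (m+1) ≤ a ^ (m+1) + m * a ^ m := by
    have hK : K ≤ 1 + (K - 1) := by omega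
    calc K * a ^ (m+1) ≤ (1 + (K-1)) * a ^ (m+1) := Nat.mul_le_mul_right _ hK
      _ = a ^ (m+1) + (K-1) * (a * a ^ m) := by ring
      _ = a ^ (m+1) + m * a ^ m := by rw [hm]; ring
  have h2 : m * a ^ m < (m+1) * a ^ m := by
    have : 0 < a ^ m := Nat.pow_pos _ha
    nlinarith
  calc K * a ^ (m+1) ≤ a ^ (m+1) + m * a ^ m := h1
    _ < a ^ (m+1) + (m+1) * a ^ m := by omega
    _ ≤ (a+1) ^ (m+1) := binom_aux a m

private lemma greedy_aux {S : Type*} [DecidableEq S] (blk : S → Finset S) (w : ℕ)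
    (hself : ∀ t : S, ¬ Disjoint (blk t) (blk t))
    (hconf : ∀ (T : Finset S) (t : S),
      (T.filter fun s => ¬ Disjoint (blk s) (blk t)).card ≤ w) :
    ∀ T : Finset S, ∃ D : Finset S, D ⊆ T ∧
      (∀ t ∈ D, ∀ t' ∈ D, t ≠ t' → Disjoint (blk t) (blk t')) ∧ T.card ≤ D.card * w := by
  intro T
  induction T using Finset.strongInduction with
  | _ T ih =>
    rcases T.eq_empty_or_nonempty with rfl | ⟨t, ht⟩
    · exact ⟨∅, Finset.Subset.refl _, by simp, by simp⟩
    · classical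
      set C := T.filter (fun s => ¬ Disjoint (blk s) (blk t)) with hC
      have htC : t ∈ C := mem_filter.2 ⟨ht, hself t⟩
      have hss : T \ C ⊂ T := by
        refine Finset.sdiff_ssubset ?_ ⟨t, htC⟩
        exact filter_subset _ _
      obtain ⟨D', hD'sub, hD'dis, hD'card⟩ := ih (T \ C) hss
      have htD' : t ∉ D' := fun h => (mem_sdiff.1 (hD'sub h)).2 htC
      refine ⟨insert t D', ?_, ?_, ?_⟩
      · intro x hx
        rcases mem_insert.1 hx with rfl | hx
        · exact ht
        · exact (mem_sdiff.1 (hD'sub hx)).1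
      · intro x hx x' hx' hne
        have key : ∀ z ∈ D', Disjoint (blk z) (blk t) := by
          intro z hz
          by_contra hcon
          exact (mem_sdiff.1 (hD'sub hz)).2
            (mem_filter.2 ⟨(mem_sdiff.1 (hD'sub hz)).1, hcon⟩)
        rcases mem_insert.1 hx with h1 | h1 <;> rcases mem_insert.1 hx' with h2 | h2
        · exact absurd (h1.trans h2.symm) hne
        · subst h1; exact ((key x' h2).symm)
        · subst h2; exact key x h1
        · exact hD'dis x h1 x' h2 hne
      · have h1 : T.card ≤ C.card + (T \ C).card := by
          have hsub2 : T ⊆ C ∪ (T \ C) := by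
            intro x hx
            by_cases hxC : x ∈ C
            · exact mem_union_left _ hxC
            · exact mem_union_right _ (mem_sdiff.2 ⟨hx, hxC⟩)
          calc T.card ≤ (C ∪ (T \ C)).card := card_le_card hsub2
            _ ≤ C.card + (T \ C).card := card_union_le _ _
        have hCw : C.card ≤ w := hconf T t
        have hcardins : (insert t D').card = D'.card + 1 := card_insert_of_notMem htD'
        calc T.card ≤ C.card + (T \ C).card := h1
          _ ≤ w + D'.card * w := Nat.add_le_add hCw hD'card
          _ = (D'.card + 1) * w := by ring
          _ = (insert t D').card * w := by rw [hcardins]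

private lemma orphan_aux {S A : Type*} [Finite A] (τ : (S → A) → (S → A))
    (hcont : ∀ s : S, ∃ I : Finset S,
      ∀ x x' : S → A, (∀ i ∈ I, x i = x' i) → τ x s = τ x' s)
    (y : S → A) (hy : ∀ x, τ x ≠ y) :
    ∃ Ω : Finset S, ∀ x, ∃ s ∈ Ω, τ x s ≠ y s := by
  classical
  by_contra h
  push_neg at h
  letI : TopologicalSpace A := ⊥
  haveI : DiscreteTopology A := ⟨rfl⟩
  have hclosed : ∀ s : S, IsClosed {x : S → A | τ x s = y s} := by
    intro s
    obtain ⟨I, hI⟩ := hcont s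
    set g : (I → A) → A := fun p =>
      τ (fun i => if h : i ∈ I then p ⟨i, h⟩ else y i) s with hg
    have hfac : ∀ x : S → A, τ x s = g (fun i : I => x ↑i) := by
      intro x
      apply hI
      intro i hi
      simp [hi]
    have heq : {x : S → A | τ x s = y s}
        = (fun (x : S → A) (i : I) => x ↑i) ⁻¹' {p | g p = y s} := by
      ext x
      simp [hfac x]
    rw [heq]
    have hcr : Continuous (fun (x : S → A) (i : I) => x (↑i : S)) :=
      continuous_pi fun i => continuous_apply _
    exact IsClosed.preimage hcr (isClosed_discrete _)
  set t : Finset S → Set (S → A) := fun Ω => {x | ∀ s ∈ Ω, τ x s = y s} with ht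
  have htd : Directed (· ⊇ ·) t := by
    intro Ω₁ Ω₂
    refine ⟨Ω₁ ∪ Ω₂, ?_, ?_⟩
    · intro x hx s hs; exact hx s (mem_union_left _ hs)
    · intro x hx s hs; exact hx s (mem_union_right _ hs)
  have htn : ∀ Ω, (t Ω).Nonempty := by
    intro Ω
    obtain ⟨x, hx⟩ := h Ω
    exact ⟨x, hx⟩
  have htc : ∀ Ω, IsClosed (t Ω) := by
    intro Ω
    have heq : t Ω = ⋂ s ∈ Ω, {x : S → A | τ x s = y s} := by
      ext x; simp [ht]
    rw [heq]
    exact isClosed_biInter fun s _ => hclosed s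
  have hne : (⋂ Ω, t Ω).Nonempty := by
    apply IsCompact.nonempty_iInter_of_directed_nonempty_isCompact_isClosed t htd htn
      (fun Ω => (htc Ω).isCompact) htc
  obtain ⟨x, hx⟩ := hne
  apply hy x
  funext s
  exact Set.mem_iInter.1 hx {s} s (mem_singleton_self s)

private def extpat {S A : Type*} [DecidableEq S] (F : Finset S) (a0 : A)
    (u : {x // x ∈ F} → A) : S → A :=
  fun s => if h : s ∈ F then u ⟨s, h⟩ else a0

private lemma extpat_mem {S A : Type*} [DecidableEq S] (F : Finset S) (a0 : A)
    (u : {x // x ∈ F} → A) (s : S) (h : s ∈ F) : extpat F a0 u s = u ⟨s, h⟩ :=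
  dif_pos h

private lemma extpat_not_mem {S A : Type*} [DecidableEq S] (F : Finset S) (a0 : A)
    (u : {x // x ∈ F} → A) (s : S) (h : s ∉ F) : extpat F a0 u s = a0 :=
  dif_neg h

/-- **Myhill property for cancellative left-amenable semigroups.** Let `S` be a
cancellative semigroup satisfying the Følner condition (which, for cancellative
semigroups, is equivalent to left-amenability) and let `A` be a finite alphabet.
Then every pre-injective cellular automaton `τ : A^S → A^S` is surjective. -/
theorem myhill_semigroup {S A : Type*} [Semigroup S] [Fintype A] [DecidableEq S]
    (hlc : ∀ s : S, Function.Injective (fun t : S => s * t))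
    (hrc : ∀ s : S, Function.Injective (fun t : S => t * s))
    (hFol : ∀ (K : Finset S) (ε : ℝ), 0 < ε → ∃ F : Finset S, F.Nonempty ∧
      ∀ k ∈ K, (((F.image (fun t : S => k * t)) \ F).card : ℝ) ≤ ε * F.card)
    (τ : (S → A) → (S → A))
    (hτ : ∃ (M : Finset S) (μ : (M → A) → A),
      ∀ (x : S → A) (s : S), τ x s = μ (fun m => x (↑m * s)))
    (hpre : ∀ x₁ x₂ : S → A, (∃ Φ : Finset S, ∀ s ∉ Φ, x₁ s = x₂ s) →
      τ x₁ = τ x₂ → x₁ = x₂) :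
    Function.Surjective τ := by
  classical
  rcases subsingleton_or_nontrivial A with hA | hA
  · haveI : Subsingleton (S → A) := ⟨fun f g => funext fun _ => Subsingleton.elim _ _⟩
    intro y; exact ⟨y, Subsingleton.elim _ _⟩
  by_contra hsurj
  rw [Function.Surjective] at hsurj
  push_neg at hsurj
  obtain ⟨y, hy⟩ := hsurj
  obtain ⟨M, μ, hμ⟩ := hτ
  obtain ⟨a0, b0, hab⟩ := exists_pair_ne A
  -- orphan pattern
  have hcont : ∀ s : S, ∃ I : Finset S,
      ∀ x x' : S → A, (∀ i ∈ I, x i = x' i) → τ x s = τ x' s := by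
    intro s
    refine ⟨M.image (fun m => m * s), fun x x' hagree => ?_⟩
    rw [hμ, hμ]
    congr 1
    funext m
    exact hagree _ (mem_image_of_mem _ m.2)
  obtain ⟨Ω, hΩ⟩ := orphan_aux τ hcont y hy
  have hΩne : Ω.Nonempty := by
    rcases Ω.eq_empty_or_nonempty with rfl | h
    · obtain ⟨s, hs, _⟩ := hΩ (fun _ => a0)
      exact absurd hs (notMem_empty s)
    · exact h
  -- translated orphan
  have horph : ∀ (x : S → A) (t : S), ∃ ω ∈ Ω, τ x (ω * t) ≠ y ω := by
    intro x t
    obtain ⟨ω, hω, hne⟩ := hΩ (fun s => x (s * t))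
    refine ⟨ω, hω, ?_⟩
    have heq : τ (fun s => x (s * t)) ω = τ x (ω * t) := by
      rw [hμ, hμ]
      congr 1
      funext m
      rw [mul_assoc]
    rwa [heq] at hne
  -- numerical setup
  set q := Fintype.card A with hq
  have hq2 : 2 ≤ q := Fintype.one_lt_card
  set w' := Ω.card with hw'
  have hw'1 : 1 ≤ w' := card_pos.2 hΩne
  set r := q ^ w' with hr
  have hr2 : 2 ≤ r := by
    calc 2 = 2 ^ 1 := (pow_one 2).symm
      _ ≤ q ^ w' := Nat.pow_le_pow_left hq2 1 |>.trans (Nat.pow_le_pow_right (by omega) hw'1)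
  set w := w' * w' with hw
  set c := M.card + Ω.card with hc
  obtain ⟨n, hn1, hn⟩ := pow_ratio_aux (r - 1) (q ^ (c * w)) (by omega)
  have hrn : (r - 1) + 1 = r := by omega
  rw [hrn] at hn
  -- Følner set
  have hεpos : (0 : ℝ) < 1 / n := by
    have : (0 : ℝ) < n := by exact_mod_cast hn1
    positivity
  obtain ⟨F, hFne, hF⟩ := hFol (M ∪ Ω) (1 / n) hεpos
  -- the enlarged window E
  set preF : S → Finset S := fun m => F.preimage (fun t => m * t) ((hlc m).injOn) with hpreF
  set E : Finset S := F ∪ (M.biUnion fun m => preF m \ F)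
      ∪ (Ω.biUnion fun ω => F.image (fun t => ω * t) \ F) with hE
  have hFE : F ⊆ E := fun s hs => mem_union_left _ (mem_union_left _ hs)
  have hpreE : ∀ m ∈ M, ∀ t : S, m * t ∈ F → t ∈ E := by
    intro m hm t hmt
    by_cases htF : t ∈ F
    · exact hFE htF
    · refine mem_union_left _ (mem_union_right _ ?_)
      exact mem_biUnion.2 ⟨m, hm, mem_sdiff.2 ⟨Finset.mem_preimage.2 hmt, htF⟩⟩
  have hblkE : ∀ ω ∈ Ω, ∀ t ∈ F, ω * t ∈ E := by
    intro ω hω t htF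
    by_cases h : ω * t ∈ F
    · exact hFE h
    · exact mem_union_right _
        (mem_biUnion.2 ⟨ω, hω, mem_sdiff.2 ⟨mem_image_of_mem _ htF, h⟩⟩)
  -- cardinality bound for E
  have hEcard : n * E.card ≤ n * F.card + c * F.card := by
    have hEnat : E.card ≤ F.card + ((∑ m ∈ M, (preF m \ F).card)
        + ∑ ω ∈ Ω, (F.image (fun t => ω * t) \ F).card) := by
      calc E.card ≤ (F ∪ M.biUnion fun m => preF m \ F).card
            + (Ω.biUnion fun ω => F.image (fun t => ω * t) \ F).card := card_union_le _ _
        _ ≤ F.card + (M.biUnion fun m => preF m \ F).card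
            + (Ω.biUnion fun ω => F.image (fun t => ω * t) \ F).card := by
              have := card_union_le F (M.biUnion fun m => preF m \ F)
              omega
        _ ≤ F.card + (∑ m ∈ M, (preF m \ F).card)
            + ∑ ω ∈ Ω, (F.image (fun t => ω * t) \ F).card := by
              have h1 := card_biUnion_le (s := M) (t := fun m => preF m \ F)
              have h2 := card_biUnion_le (s := Ω) (t := fun ω => F.image (fun t => ω * t) \ F)
              omega
        _ = F.card + ((∑ m ∈ M, (preF m \ F).card)
            + ∑ ω ∈ Ω, (F.image (fun t => ω * t) \ F).card) := by ring
    have hpre_le : ∀ m : S, (preF m \ F).card ≤ (F.image (fun t => m * t) \ F).card := by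
      intro m
      have step1 : (preF m \ F).card ≤ (F \ F.image (fun t => m * t)).card := by
        apply Finset.card_le_card_of_injOn (fun t => m * t)
        · intro t htm
          obtain ⟨ht1, ht2⟩ := mem_sdiff.1 htm
          refine mem_sdiff.2 ⟨Finset.mem_preimage.1 ht1, ?_⟩
          intro hcon
          obtain ⟨f, hf, hfeq⟩ := mem_image.1 hcon
          exact ht2 (by rwa [← hlc m hfeq])
        · exact ((hlc m).injOn)
      have step2 : (F \ F.image (fun t => m * t)).card
          = (F.image (fun t => m * t) \ F).card := by
        apply Finset.card_sdiff_comm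
        exact (card_image_of_injective F (hlc m)).symm
      omega
    have hreal : (E.card : ℝ) ≤ F.card + c * ((1 / n) * F.card) := by
      have hM : ∀ m ∈ M, ((preF m \ F).card : ℝ) ≤ (1 / n) * F.card := by
        intro m hm
        calc ((preF m \ F).card : ℝ) ≤ ((F.image (fun t => m * t) \ F).card : ℝ) := by
              exact_mod_cast hpre_le m
          _ ≤ (1 / n) * F.card := hF m (mem_union_left _ hm)
      have hW : ∀ ω ∈ Ω, ((F.image (fun t => ω * t) \ F).card : ℝ) ≤ (1 / n) * F.card :=
        fun ω hω => hF ω (mem_union_right _ hω)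
      have hsum1 : ((∑ m ∈ M, (preF m \ F).card : ℕ) : ℝ) ≤ M.card * ((1 / n) * F.card) := by
        push_cast
        calc (∑ m ∈ M, ((preF m \ F).card : ℝ))
            ≤ ∑ _m ∈ M, (1 / (n : ℝ)) * (F.card : ℝ) := Finset.sum_le_sum hM
          _ = M.card * ((1 / n) * F.card) := by rw [Finset.sum_const, nsmul_eq_mul]
      have hsum2 : ((∑ ω ∈ Ω, (F.image (fun t => ω * t) \ F).card : ℕ) : ℝ)
          ≤ Ω.card * ((1 / n) * F.card) := by
        push_cast
        calc (∑ ω ∈ Ω, ((F.image (fun t => ω * t) \ F).card : ℝ))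
            ≤ ∑ _ω ∈ Ω, (1 / (n : ℝ)) * (F.card : ℝ) := Finset.sum_le_sum hW
          _ = Ω.card * ((1 / n) * F.card) := by rw [Finset.sum_const, nsmul_eq_mul]
      have hcast : (E.card : ℝ) ≤ (F.card : ℝ) + (((∑ m ∈ M, (preF m \ F).card : ℕ) : ℝ)
          + ((∑ ω ∈ Ω, (F.image (fun t => ω * t) \ F).card : ℕ) : ℝ)) := by
        exact_mod_cast hEnat
      have hceq : (c : ℝ) = M.card + Ω.card := by rw [hc]; push_cast; ring
      rw [hceq]
      nlinarith [mul_nonneg (mul_nonneg (le_of_lt hεpos) (Nat.cast_nonneg F.card))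
        (Nat.cast_nonneg M.card)]
    have hnne : (n : ℝ) ≠ 0 := by
      have : (0 : ℝ) < n := by exact_mod_cast hn1
      linarith
    have hrealn : (n : ℝ) * E.card ≤ n * F.card + c * F.card := by
      have h1 : (n : ℝ) * E.card ≤ n * (F.card + c * ((1 / n) * F.card)) := by
        apply mul_le_mul_of_nonneg_left hreal
        positivity
      have h2 : (n : ℝ) * (F.card + c * ((1 / n) * F.card)) = n * F.card + c * F.card := by
        field_simp
      linarith
    exact_mod_cast hrealn
  -- greedy disjoint translates
  set blk : S → Finset S := fun s => Ω.image (fun ω => ω * s) with hblk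
  have hself : ∀ t : S, ¬ Disjoint (blk t) (blk t) := by
    intro t
    rw [disjoint_self, Finset.bot_eq_empty, Finset.image_eq_empty]
    exact hΩne.ne_empty
  have hconf : ∀ (T : Finset S) (t : S),
      (T.filter fun s => ¬ Disjoint (blk s) (blk t)).card ≤ w := by
    intro T t
    have hsub : (T.filter fun s => ¬ Disjoint (blk s) (blk t))
        ⊆ (Ω ×ˢ Ω).biUnion (fun p => T.filter fun s => p.1 * s = p.2 * t) := by
      intro s hs
      obtain ⟨hsT, hnd⟩ := mem_filter.1 hs
      rw [Finset.not_disjoint_iff] at hnd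
      obtain ⟨z, hz1, hz2⟩ := hnd
      obtain ⟨ω, hω, rfl⟩ := mem_image.1 hz1
      obtain ⟨ω', hω', heq⟩ := mem_image.1 hz2
      exact mem_biUnion.2 ⟨(ω, ω'), mem_product.2 ⟨hω, hω'⟩,
        mem_filter.2 ⟨hsT, heq.symm⟩⟩
    have hone : ∀ p : S × S, (T.filter fun s => p.1 * s = p.2 * t).card ≤ 1 := by
      intro p
      apply card_le_one.2
      intro s1 hs1 s2 hs2
      have h1 := (mem_filter.1 hs1).2
      have h2 := (mem_filter.1 hs2).2
      exact hlc p.1 (h1.trans h2.symm)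
    calc (T.filter fun s => ¬ Disjoint (blk s) (blk t)).card
        ≤ ((Ω ×ˢ Ω).biUnion (fun p => T.filter fun s => p.1 * s = p.2 * t)).card :=
          card_le_card hsub
      _ ≤ ∑ p ∈ Ω ×ˢ Ω, (T.filter fun s => p.1 * s = p.2 * t).card := card_biUnion_le
      _ ≤ ∑ _p ∈ Ω ×ˢ Ω, 1 := Finset.sum_le_sum (fun p _ => hone p)
      _ = (Ω ×ˢ Ω).card := by simp
      _ = w := by rw [Finset.card_product, hw]
  obtain ⟨D, hDF, hDdis, hFw⟩ := greedy_aux blk w hself hconf F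
  set N := D.card with hN
  have hN1 : 1 ≤ N := by
    rcases Nat.eq_zero_or_pos N with h0 | h
    · rw [h0] at hFw
      simp at hFw
      exact absurd hFw hFne.ne_empty
    · exact h
  -- block union
  set U : Finset S := D.biUnion blk with hU
  have hUE : U ⊆ E := by
    intro z hz
    obtain ⟨t, ht, hzt⟩ := mem_biUnion.1 hz
    obtain ⟨ω, hω, rfl⟩ := mem_image.1 hzt
    exact hblkE ω hω t (hDF ht)
  have hUcard : U.card = N * w' := by
    rw [hU, card_biUnion hDdis]
    calc (∑ t ∈ D, (blk t).card) = ∑ _t ∈ D, w' := by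
          apply Finset.sum_congr rfl
          intro t _
          exact card_image_of_injective Ω (hrc t)
      _ = N * w' := by rw [Finset.sum_const, smul_eq_mul]
  have hNw'E : N * w' ≤ E.card := hUcard ▸ card_le_card hUE
  set R : Finset S := E \ U with hR
  have hRcard : R.card = E.card - N * w' := by rw [hR, card_sdiff_of_subset hUE, hUcard]
  -- the injection
  set v₀ : {x // x ∈ Ω} → A := fun ω => y ↑ω with hv₀
  have hΨprop : ∀ (u : {x // x ∈ F} → A) (t : S),
      (fun ω : {x // x ∈ Ω} => τ (extpat F a0 u) (↑ω * t)) ≠ v₀ := by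
    intro u t hcontr
    obtain ⟨ω, hω, hne⟩ := horph (extpat F a0 u) t
    exact hne (congrFun hcontr ⟨ω, hω⟩)
  set Ψ : ({x // x ∈ F} → A) →
      ((∀ _t : {x // x ∈ D}, {v : {x // x ∈ Ω} → A // v ≠ v₀}) × ({x // x ∈ R} → A)) :=
    fun u => ⟨fun t => ⟨fun ω => τ (extpat F a0 u) (↑ω * ↑t), hΨprop u ↑t⟩,
      fun e => τ (extpat F a0 u) ↑e⟩ with hΨ
  have hinj : Function.Injective Ψ := by
    intro u v huv
    have h1 : ∀ t ∈ D, ∀ ω ∈ Ω,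
        τ (extpat F a0 u) (ω * t) = τ (extpat F a0 v) (ω * t) := by
      intro t ht ω hω
      have ha := congrFun (congrArg Prod.fst huv) ⟨t, ht⟩
      have hb := congrArg Subtype.val ha
      exact congrFun hb ⟨ω, hω⟩
    have h2 : ∀ e ∈ R, τ (extpat F a0 u) e = τ (extpat F a0 v) e :=
      fun e he => congrFun (congrArg Prod.snd huv) ⟨e, he⟩
    have hall : ∀ e, τ (extpat F a0 u) e = τ (extpat F a0 v) e := by
      intro e
      by_cases heE : e ∈ E
      · by_cases heU : e ∈ U
        · obtain ⟨t, ht, hblkmem⟩ := mem_biUnion.1 heU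
          obtain ⟨ω, hω, rfl⟩ := mem_image.1 hblkmem
          exact h1 t ht ω hω
        · exact h2 e (mem_sdiff.2 ⟨heE, heU⟩)
      · rw [hμ, hμ]
        congr 1
        funext m
        have hm : (↑m * e) ∉ F := fun hmf => heE (hpreE ↑m m.2 e hmf)
        rw [extpat_not_mem F a0 u _ hm, extpat_not_mem F a0 v _ hm]
    have heq : τ (extpat F a0 u) = τ (extpat F a0 v) := funext hall
    have hout : ∃ Φ : Finset S, ∀ s ∉ Φ, extpat F a0 u s = extpat F a0 v s :=
      ⟨F, fun s hs => by rw [extpat_not_mem F a0 u _ hs, extpat_not_mem F a0 v _ hs]⟩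
    have hext := hpre (extpat F a0 u) (extpat F a0 v) hout heq
    funext s
    have hs := congrFun hext ↑s
    rw [extpat_mem F a0 u _ s.2, extpat_mem F a0 v _ s.2] at hs
    exact hs
  -- counting
  have hsubcard : Fintype.card {v : {x // x ∈ Ω} → A // v ≠ v₀} = r - 1 := by
    have h1 : Fintype.card {v : {x // x ∈ Ω} → A // ¬ (v = v₀)}
        = Fintype.card ({x // x ∈ Ω} → A) - Fintype.card {v : {x // x ∈ Ω} → A // v = v₀} :=
      Fintype.card_subtype_compl _
    have h2 : Fintype.card ({x // x ∈ Ω} → A) = r := by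
      rw [Fintype.card_fun, Fintype.card_coe, hr, hq, hw']
    have h3 : Fintype.card {v : {x // x ∈ Ω} → A // v = v₀} = 1 := Fintype.card_subtype_eq v₀
    calc Fintype.card {v : {x // x ∈ Ω} → A // v ≠ v₀}
        = Fintype.card {v : {x // x ∈ Ω} → A // ¬ (v = v₀)} := rfl
      _ = r - 1 := by rw [h1, h2, h3]
  have hmain : q ^ F.card ≤ (r - 1) ^ N * q ^ (E.card - N * w') := by
    calc q ^ F.card = Fintype.card ({x // x ∈ F} → A) := by
          rw [Fintype.card_fun, Fintype.card_coe, hq]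
      _ ≤ Fintype.card ((∀ _t : {x // x ∈ D}, {v : {x // x ∈ Ω} → A // v ≠ v₀})
          × ({x // x ∈ R} → A)) := Fintype.card_le_of_injective Ψ hinj
      _ = (r - 1) ^ N * q ^ (E.card - N * w') := by
          rw [Fintype.card_prod, Fintype.card_pi, Fintype.card_fun, Fintype.card_coe]
          congr 1
          · rw [Finset.prod_congr rfl (fun t _ => hsubcard), Finset.prod_const,
              Finset.card_univ, Fintype.card_coe, hN]
          · rw [hRcard, hq]
  -- final arithmetic contradiction
  have hq1 : 1 ≤ q := by omega
  set B := E.card - F.card with hB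
  have hEB : E.card ≤ F.card + B := by omega
  have hnB : n * B ≤ c * F.card := by
    have hms : n * B = n * E.card - n * F.card := by
      rw [hB]; exact Nat.mul_sub n _ _
    omega
  have key1 : q ^ F.card * q ^ (N * w') ≤ (r - 1) ^ N * q ^ E.card := by
    calc q ^ F.card * q ^ (N * w')
        ≤ ((r - 1) ^ N * q ^ (E.card - N * w')) * q ^ (N * w') :=
          Nat.mul_le_mul_right _ hmain
      _ = (r - 1) ^ N * (q ^ (E.card - N * w') * q ^ (N * w')) := by ring
      _ = (r - 1) ^ N * q ^ E.card := by rw [← pow_add, Nat.sub_add_cancel hNw'E]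
  have key2 : (r - 1) ^ N * q ^ E.card ≤ (r - 1) ^ N * (q ^ F.card * q ^ B) := by
    apply Nat.mul_le_mul_left
    rw [← pow_add]
    exact Nat.pow_le_pow_right hq1 hEB
  have key3 : q ^ (N * w') ≤ (r - 1) ^ N * q ^ B := by
    have hcomb : q ^ F.card * q ^ (N * w') ≤ q ^ F.card * ((r - 1) ^ N * q ^ B) := by
      calc q ^ F.card * q ^ (N * w') ≤ (r - 1) ^ N * (q ^ F.card * q ^ B) :=
            key1.trans key2
        _ = q ^ F.card * ((r - 1) ^ N * q ^ B) := by ring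
    exact Nat.le_of_mul_le_mul_left hcomb (Nat.pow_pos (by omega : 0 < q))
  have key4 : r ^ N ≤ (r - 1) ^ N * q ^ B := by
    have : r ^ N = q ^ (N * w') := by rw [hr, ← pow_mul, mul_comm w' N]
    rwa [this]
  have hBn : B * n ≤ (c * w) * N := by
    calc B * n = n * B := mul_comm _ _
      _ ≤ c * F.card := hnB
      _ ≤ c * (N * w) := Nat.mul_le_mul_left c hFw
      _ = (c * w) * N := by ring
  have key5 : (r ^ N) ^ n ≤ ((r - 1) ^ n * q ^ (c * w)) ^ N := by
    calc (r ^ N) ^ n ≤ ((r - 1) ^ N * q ^ B) ^ n := Nat.pow_le_pow_left key4 n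
      _ = (r - 1) ^ (N * n) * q ^ (B * n) := by rw [mul_pow, ← pow_mul, ← pow_mul]
      _ ≤ (r - 1) ^ (N * n) * q ^ ((c * w) * N) := by
          apply Nat.mul_le_mul_left
          exact Nat.pow_le_pow_right hq1 hBn
      _ = ((r - 1) ^ n) ^ N * (q ^ (c * w)) ^ N := by
          rw [← pow_mul, ← pow_mul, mul_comm n N]
      _ = ((r - 1) ^ n * q ^ (c * w)) ^ N := (mul_pow _ _ _).symm
  have key6 : ((r - 1) ^ n * q ^ (c * w)) ^ N ≤ (r ^ n - 1) ^ N := by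
    apply Nat.pow_le_pow_left
    have h2 : (r - 1) ^ n * q ^ (c * w) = q ^ (c * w) * (r - 1) ^ n := mul_comm _ _
    omega
  have key7 : (r ^ n - 1) ^ N < (r ^ n) ^ N := by
    apply Nat.pow_lt_pow_left
    · have : 0 < r ^ n := Nat.pow_pos (by omega : 0 < r)
      omega
    · omega
  have hfinal : (r ^ N) ^ n < (r ^ N) ^ n := by
    calc (r ^ N) ^ n ≤ ((r - 1) ^ n * q ^ (c * w)) ^ N := key5
      _ ≤ (r ^ n - 1) ^ N := key6
      _ < (r ^ n) ^ N := key7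
      _ = r ^ (n * N) := (pow_mul r n N).symm
      _ = r ^ (N * n) := by rw [Nat.mul_comm]
      _ = (r ^ N) ^ n := pow_mul r N n
  exact absurd hfinal (lt_irrefl _)
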